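/- Let S be a set of pmfs on countable sets such that the greatest lower bound ⋀S with respect to majorization exists. Then the pmf (⋀S) × Geom_{1/2} is an underlying distribution of a coupling of S, i.e., for every p ∈ S, p is an aggregation of (⋀S) × Geom_{1/2} ((⋀S) × Geom_{1/2} ⊑ p). -/

import Mathlib

open scoped ENNReal Classical
open Filter

namespace MEC

/-- A probability mass function on `α`: (nonnegative) masses summing to `1`. -/
def IsPMF {α : Type*} (p : α → ℝ≥0∞) : Prop := ∑' x, p x = 1

/-- `p` is an aggregation of `q`, written `q ⊑ p`: there is a map `g` sending the support of
`q` into the support of `p` such that `p` is the pushforward of `q` under `g`. -/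
def Agg {α β : Type*} (q : α → ℝ≥0∞) (p : β → ℝ≥0∞) : Prop :=
  ∃ g : α → β, (∀ x, q x ≠ 0 → p (g x) ≠ 0) ∧
    ∀ y, p y = ∑' x, if g x = y then q x else 0

/-- Sum of the `k` largest masses of `p`, i.e. `max_{A, |A| ≤ k} p(A)`. -/
noncomputable def topk {α : Type*} (p : α → ℝ≥0∞) (k : ℕ) : ℝ≥0∞ :=
  ⨆ (A : Finset α) (_ : A.card ≤ k), ∑ x ∈ A, p x

/-- `q` is majorized by `p`, written `q ⪯ p`: for every `k`, the sum of the `k` largest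
masses of `q` is at most the sum of the `k` largest masses of `p`. -/
def Majorized {α β : Type*} (q : α → ℝ≥0∞) (p : β → ℝ≥0∞) : Prop :=
  ∀ k : ℕ, topk q k ≤ topk p k

/-- Product pmf `(q × r)(x,z) = q(x) · r(z)`. -/
noncomputable def prodFun {α β : Type*} (q : α → ℝ≥0∞) (r : β → ℝ≥0∞) : α × β → ℝ≥0∞ :=
  fun z => q z.1 * r z.2

/-- `Geom_{1/2}` on `ℕ+ = {1,2,3,...}`, with mass `2^{-x}` at `x`. -/
noncomputable def geomHalf : ℕ+ → ℝ≥0∞ := fun x => 2⁻¹ ^ (x : ℕ)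

/-- Capped geometric distribution `CGeom_{1/2,k}` on `{1,...,k} ⊆ ℕ+`. -/
noncomputable def cgeomHalf (k : ℕ) : ℕ+ → ℝ≥0∞ := fun x =>
  if (x : ℕ) < k then 2⁻¹ ^ (x : ℕ) else if (x : ℕ) = k then 2⁻¹ ^ (k - 1) else 0

/-- `inf_{p ∈ S} max_{A ⊆ supp(p), |A| ≤ k} p(A)`. -/
noncomputable def infTopk {α : Type*} (S : Set (α → ℝ≥0∞)) (k : ℕ) : ℝ≥0∞ :=
  ⨅ p ∈ S, topk p k

/-- The greatest lower bound `⋀S` of `S` with respect to majorization, as a pmf on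
`ℕ+ = {1,2,...}`, with `(⋀S)(k) = inf_{p∈S} max_{|A|≤k} p(A) − inf_{p∈S} max_{|A|≤k−1} p(A)`. -/
noncomputable def glb {α : Type*} (S : Set (α → ℝ≥0∞)) : ℕ+ → ℝ≥0∞ :=
  fun k => infTopk S (k : ℕ) - infTopk S ((k : ℕ) - 1)

/-- Condition for the existence of `⋀S`:
`lim_{k→∞} inf_{p∈S} max_{A⊆supp(p), |A|≤k} p(A) = 1`. -/
def GlbExists {α : Type*} (S : Set (α → ℝ≥0∞)) : Prop :=
  Tendsto (fun k => infTopk S k) atTop (nhds 1)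

/-- Base-2 logarithm on `ℝ≥0∞` (intended for arguments in `[1,∞]`). -/
noncomputable def log2 (x : ℝ≥0∞) : ℝ≥0∞ :=
  if x = ∞ then ∞ else ENNReal.ofReal (Real.logb 2 x.toReal)

/-- Shannon entropy (base 2): `H(p) = Σ_x p(x) log₂ (1/p(x))`. -/
noncomputable def shannon {α : Type*} (p : α → ℝ≥0∞) : ℝ≥0∞ :=
  ∑' x, p x * log2 (p x)⁻¹

/-- Rényi entropy of order `a ∈ [0,∞]` (base 2):
`H_a(p) = (1/(1−a)) log₂ Σ_{x ∈ supp(p)} p(x)^a` for `a ∉ {1,∞}` (for `a > 1` this is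
written in the equivalent form `(1/(a−1)) log₂ (Σ_{x ∈ supp(p)} p(x)^a)⁻¹` so that it is
nonnegative), Shannon entropy for `a = 1`, and `−log₂ max_x p(x)` for `a = ∞`. -/
noncomputable def renyi {α : Type*} (p : α → ℝ≥0∞) (a : ℝ≥0∞) : ℝ≥0∞ :=
  if a = 1 then shannon p
  else if a = ∞ then log2 (⨆ x, p x)⁻¹
  else if a < 1 then log2 (∑' x, if p x = 0 then 0 else p x ^ a.toReal) * (1 - a)⁻¹
  else log2 (∑' x, if p x = 0 then 0 else p x ^ a.toReal)⁻¹ * (a - 1)⁻¹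

/-- `q ∈ Γ̃(S)`: `q` (a pmf over `ℕ`, without loss of generality) is an underlying
distribution of a coupling of `S`, i.e. `q ⊑ p` for every `p ∈ S`. -/
def UnderlyingCoupling {α : Type*} (S : Set (α → ℝ≥0∞)) (q : ℕ → ℝ≥0∞) : Prop :=
  IsPMF q ∧ ∀ p ∈ S, Agg q p

/-- `H*_a(S) = inf_{q ∈ Γ̃(S)} H_a(q)`, the minimum Rényi entropy of couplings of `S`. -/
noncomputable def minRenyi {α : Type*} (S : Set (α → ℝ≥0∞)) (a : ℝ≥0∞) : ℝ≥0∞ :=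
  ⨅ (q : ℕ → ℝ≥0∞) (_ : UnderlyingCoupling S q), renyi q a

section Aux

lemma geomHalf_ne_zero (z : ℕ+) : geomHalf z ≠ 0 := by
  simp [geomHalf]

lemma two_inv_mul_two : (2⁻¹ : ℝ≥0∞) * 2 = 1 := by
  rw [mul_comm]; exact ENNReal.mul_inv_cancel (by norm_num) (by norm_num)

lemma pow_two_inv_antitone {m n : ℕ} (h : m ≤ n) : (2⁻¹ : ℝ≥0∞) ^ n ≤ 2⁻¹ ^ m :=
  pow_le_pow_of_le_one (by norm_num) (by norm_num) h

lemma tsum_geomHalf : ∑' z : ℕ+, geomHalf z = 1 := by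
  rw [← (Equiv.pnatEquivNat.symm).tsum_eq (f := geomHalf)]
  have h1 : ∀ n : ℕ, geomHalf (Equiv.pnatEquivNat.symm n) = 2⁻¹ * 2⁻¹ ^ n := by
    intro n
    simp [geomHalf, Equiv.pnatEquivNat, Nat.succPNat]
    rw [pow_succ, mul_comm]
  rw [tsum_congr h1, ENNReal.tsum_mul_left, ENNReal.tsum_geometric]
  rw [ENNReal.one_sub_inv_two]
  refine ENNReal.mul_inv_cancel ?_ ?_ <;> norm_num

lemma tsum_prodFun {q : ℕ+ → ℝ≥0∞} (hq1 : ∑' i, q i = 1) :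
    ∑' x : ℕ+ × ℕ+, prodFun q geomHalf x = 1 := by
  have h := ENNReal.tsum_prod (f := fun a b : ℕ+ => q a * geomHalf b)
  calc ∑' x : ℕ+ × ℕ+, prodFun q geomHalf x
      = ∑' (a : ℕ+) (b : ℕ+), q a * geomHalf b := h
    _ = ∑' (a : ℕ+), q a * ∑' b, geomHalf b := tsum_congr fun a => ENNReal.tsum_mul_left
    _ = 1 := by rw [tsum_geomHalf]; simpa using hq1

/-- Dyadic finite-sum bound. -/
lemma dyadic_bound : ∀ (M : ℕ) (Z : Finset ℕ+), (∀ z ∈ Z, (z : ℕ) ≤ M) →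
    (∑ z ∈ Z, (2⁻¹ : ℝ≥0∞) ^ (z : ℕ)) + 2⁻¹ ^ M ≤ 1 := by
  intro M
  induction M with
  | zero => intro Z hZ
            have : Z = ∅ := by
              ext z; simp only [Finset.notMem_empty, iff_false]
              intro hz
              have h1 := hZ z hz
              have h2 := z.pos
              omega
            simp [this]
  | succ M ih =>
    intro Z hZ
    by_cases hM : (⟨M+1, Nat.succ_pos M⟩ : ℕ+) ∈ Z
    · have h1 : ∀ z ∈ Z.erase ⟨M+1, Nat.succ_pos M⟩, (z : ℕ) ≤ M := by
        intro z hz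
        have hzZ := Finset.mem_of_mem_erase hz
        have hne := Finset.ne_of_mem_erase hz
        have h2 := hZ z hzZ
        rcases Nat.lt_or_ge (z : ℕ) (M+1) with h | h
        · omega
        · exact absurd (PNat.coe_injective
            (show ((z:ℕ)) = ((⟨M+1, Nat.succ_pos M⟩:ℕ+):ℕ) by simp; omega)) hne
      have hsum : ∑ z ∈ Z, (2⁻¹ : ℝ≥0∞) ^ (z : ℕ)
          = (∑ z ∈ Z.erase ⟨M+1, Nat.succ_pos M⟩, (2⁻¹ : ℝ≥0∞) ^ (z : ℕ)) + 2⁻¹ ^ (M+1) :=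
        (Finset.sum_erase_add _ _ hM).symm
      rw [hsum, add_assoc]
      have h3 : (2⁻¹ : ℝ≥0∞) ^ (M+1) + 2⁻¹ ^ (M+1) = 2⁻¹ ^ M := by
        rw [← two_mul, pow_succ, ← mul_assoc, mul_comm (2:ℝ≥0∞), mul_assoc]
        rw [mul_comm (2:ℝ≥0∞) 2⁻¹, two_inv_mul_two, mul_one]
      rw [h3]
      exact ih _ h1
    · have h1 : ∀ z ∈ Z, (z : ℕ) ≤ M := by
        intro z hz
        have h2 := hZ z hz
        rcases Nat.lt_or_ge (z : ℕ) (M+1) with h | h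
        · omega
        · exact absurd (PNat.coe_injective
            (show ((z:ℕ)) = ((⟨M+1, Nat.succ_pos M⟩:ℕ+):ℕ) by simp; omega))
            (fun he => hM (he ▸ hz))
      calc (∑ z ∈ Z, (2⁻¹ : ℝ≥0∞) ^ (z : ℕ)) + 2⁻¹ ^ (M+1)
          ≤ (∑ z ∈ Z, (2⁻¹ : ℝ≥0∞) ^ (z : ℕ)) + 2⁻¹ ^ M :=
            add_le_add_right (pow_two_inv_antitone (Nat.le_succ M)) _
        _ ≤ 1 := ih _ h1


section Enum

variable {q : ℕ+ → ℝ≥0∞}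

lemma finite_ge {c : ℝ≥0∞} (hq1 : ∑' i, q i = 1) (hc : c ≠ 0) :
    {x : ℕ+ × ℕ+ | c ≤ prodFun q geomHalf x}.Finite :=
  ENNReal.finite_const_le_of_tsum_ne_top (by rw [tsum_prodFun hq1]; exact ENNReal.one_ne_top) hc

lemma pos_infinite (hq1 : ∑' i, q i = 1) :
    {x : ℕ+ × ℕ+ | prodFun q geomHalf x ≠ 0}.Infinite := by
  have hi0 : ∃ i0, q i0 ≠ 0 := by
    by_contra h
    push_neg at h
    rw [tsum_congr (fun i => h i)] at hq1
    simp at hq1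
  obtain ⟨i0, hi0⟩ := hi0
  apply Set.infinite_of_injective_forall_mem (f := fun z : ℕ+ => ((i0, z) : ℕ+ × ℕ+))
    (hi := fun a b hab => by simpa using congrArg Prod.snd hab)
  intro z
  simp only [Set.mem_setOf_eq, prodFun]
  exact mul_ne_zero hi0 (geomHalf_ne_zero z)

lemma exists_maximal_piece (hq1 : ∑' i, q i = 1) (A : Finset (ℕ+ × ℕ+)) :
    ∃ m : ℕ+ × ℕ+, prodFun q geomHalf m ≠ 0 ∧ m ∉ A ∧
      ∀ x, prodFun q geomHalf x ≠ 0 → x ∉ A → prodFun q geomHalf x ≤ prodFun q geomHalf m := by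
  set π := prodFun q geomHalf with hπ
  obtain ⟨x0, hx0pos, hx0A⟩ := (pos_infinite hq1).exists_notMem_finset A
  have hFfin : {x : ℕ+ × ℕ+ | π x0 ≤ π x ∧ π x ≠ 0 ∧ x ∉ A}.Finite :=
    (finite_ge hq1 hx0pos).subset (fun x hx => hx.1)
  have hFne : x0 ∈ {x : ℕ+ × ℕ+ | π x0 ≤ π x ∧ π x ≠ 0 ∧ x ∉ A} := ⟨le_rfl, hx0pos, hx0A⟩
  obtain ⟨m, hm, hmax⟩ := Set.Finite.exists_maximalFor π _ hFfin ⟨x0, hFne⟩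
  refine ⟨m, hm.2.1, hm.2.2, ?_⟩
  intro x hx hxA
  by_cases hc : π x0 ≤ π x
  · by_contra hlt
    push_neg at hlt
    exact absurd (hmax ⟨hc, hx, hxA⟩ hlt.le) (not_le.2 hlt)
  · push_neg at hc
    exact hc.le.trans hm.1

/-- Enumeration of the positive pieces in nonincreasing order. -/
lemma exists_enum (hq1 : ∑' i, q i = 1) :
    ∃ σ : ℕ → ℕ+ × ℕ+, Function.Injective σ ∧
      (∀ t, prodFun q geomHalf (σ t) ≠ 0) ∧
      (∀ x, prodFun q geomHalf x ≠ 0 → x ∈ Set.range σ) ∧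
      (∀ s t : ℕ, s ≤ t → prodFun q geomHalf (σ t) ≤ prodFun q geomHalf (σ s)) := by
  set π := prodFun q geomHalf with hπ
  have hmax := exists_maximal_piece hq1
  let chosen : ℕ → Finset (ℕ+ × ℕ+) := fun t =>
    Nat.rec ∅ (fun _ A => insert (hmax A).choose A) t
  let σ : ℕ → ℕ+ × ℕ+ := fun t => (hmax (chosen t)).choose
  have hchsucc : ∀ t, chosen (t + 1) = insert (σ t) (chosen t) := fun t => rfl
  have hspec : ∀ t, π (σ t) ≠ 0 ∧ σ t ∉ chosen t ∧
      ∀ x, π x ≠ 0 → x ∉ chosen t → π x ≤ π (σ t) := fun t => (hmax (chosen t)).choose_spec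
  have hcheq : ∀ t, chosen t = (Finset.range t).image σ := by
    intro t
    induction t with
    | zero => rfl
    | succ t ih => rw [hchsucc, Finset.range_add_one, Finset.image_insert, ih]
  have hmem : ∀ {s t : ℕ}, s < t → σ s ∈ chosen t := by
    intro s t h
    rw [hcheq t]
    exact Finset.mem_image_of_mem σ (Finset.mem_range.2 h)
  have hinj : Function.Injective σ := by
    intro s t hst
    by_contra hne
    rcases Ne.lt_or_gt hne with h | h
    · have h2 := hmem h; rw [hst] at h2; exact (hspec t).2.1 h2
    · have h2 := hmem h; rw [← hst] at h2; exact (hspec s).2.1 h2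
  have hanti : ∀ t, π (σ (t+1)) ≤ π (σ t) := by
    intro t
    refine (hspec t).2.2 _ (hspec (t+1)).1 ?_
    intro hc
    exact (hspec (t+1)).2.1 (by rw [hchsucc]; exact Finset.mem_insert_of_mem hc)
  refine ⟨σ, hinj, fun t => (hspec t).1, ?_, ?_⟩
  · -- surjectivity onto positives
    intro x hx
    by_contra hxr
    have hF : {x' : ℕ+ × ℕ+ | π x ≤ π x'}.Finite := finite_ge hq1 hx
    have hsub : Set.range σ ⊆ {x' : ℕ+ × ℕ+ | π x ≤ π x'} := by
      rintro - ⟨t, rfl⟩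
      refine (hspec t).2.2 x hx ?_
      intro hc
      rw [hcheq t] at hc
      obtain ⟨s, -, hs⟩ := Finset.mem_image.1 hc
      exact hxr ⟨s, hs⟩
    exact Set.infinite_range_of_injective hinj (hF.subset hsub)
  · intro s t hst
    induction t with
    | zero => rw [Nat.le_zero.1 hst]
    | succ t ih =>
      rcases Nat.lt_or_ge s (t+1) with h | h
      · exact (hanti t).trans (ih (by omega))
      · rw [show s = t+1 by omega]

end Enum


theorem exists_agg {α : Type*} (p : α → ℝ≥0∞) (q : ℕ+ → ℝ≥0∞)
    (hp1 : ∑' y, p y = 1) (hq1 : ∑' i, q i = 1)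
    (hmaj : ∀ K : Finset ℕ+, (∑ i ∈ K, q i) ≤ topk p K.card) :
    Agg (prodFun q geomHalf) p := by
  set π := prodFun q geomHalf with hπdef
  obtain ⟨σ, hinj, hpos, hsurj, hanti⟩ := exists_enum hq1
  have hy0 : ∃ y, p y ≠ 0 := by
    by_contra h
    push_neg at h
    rw [tsum_congr (fun y => h y)] at hp1
    simp at hp1
  obtain ⟨y₀, hy₀⟩ := hy0
  -- piece masses are ≤ 1
  have hπle1 : ∀ x, π x ≤ 1 := fun x => (ENNReal.le_tsum x).trans (tsum_prodFun hq1).le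
  have hqle1 : ∀ i, q i ≤ 1 := fun i => (ENNReal.le_tsum i).trans hq1.le
  -- the greedy state
  let gstep : (α → ℝ≥0∞) → ℕ → α := fun u t =>
    if h : ∃ y, u y + π (σ t) ≤ p y then h.choose else y₀
  let ustate : ℕ → α → ℝ≥0∞ := fun t =>
    Nat.rec (fun _ => 0) (fun t' u => fun y => u y + if gstep u t' = y then π (σ t') else 0) t
  let G : ℕ → α := fun t => gstep (ustate t) t
  have husucc : ∀ t y, ustate (t+1) y = ustate t y + if G t = y then π (σ t) else 0 :=
    fun t y => rfl
  have hG : ∀ t (ht : ∃ y, ustate t y + π (σ t) ≤ p y), G t = ht.choose :=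
    fun t ht => dif_pos ht
  -- the key no-stuck lemma
  have P_all : ∀ t, ∃ y, ustate t y + π (σ t) ≤ p y := by
    intro t
    induction t using Nat.strong_induction_on with
    | _ t IH =>
    -- invariant : mass already assigned to a bin never exceeds it
    have hle : ∀ t'', t'' ≤ t → ∀ y, ustate t'' y ≤ p y := by
      intro t''
      induction t'' with
      | zero => intro _ y; exact zero_le
      | succ t'' ih =>
        intro h y
        have hP := IH t'' (by omega)
        rw [husucc]
        by_cases hy : G t'' = y
        · rw [if_pos hy, ← hy, hG t'' hP]
          exact hP.choose_spec
        · rw [if_neg hy, add_zero]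
          exact ih (by omega) y
    by_contra hstuck
    push_neg at hstuck
    -- notation
    set s := π (σ t) with hs
    have hst : s ≠ 0 := hpos t
    have hsle1 : s ≤ 1 := hπle1 _
    set i0 := (σ t).1 with hi0def
    set z0 := (σ t).2 with hz0def
    have hs_eq : s = q i0 * 2⁻¹ ^ (z0 : ℕ) := rfl
    -- atoms that have large mass
    have hKfin : {i : ℕ+ | 2 * s ≤ q i}.Finite :=
      ENNReal.finite_const_le_of_tsum_ne_top (by rw [hq1]; exact ENNReal.one_ne_top)
        (mul_ne_zero (by norm_num) hst)
    set K := hKfin.toFinset with hKdef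
    set n := K.card with hndef
    have hatom : ∀ (i : ℕ+) (z : ℕ+), s ≤ q i * 2⁻¹ ^ (z : ℕ) → 2 * s ≤ q i := by
      intro i z hsz
      have h1 : q i * 2⁻¹ ^ (z : ℕ) ≤ q i * 2⁻¹ ^ (1 : ℕ) :=
        mul_le_mul_right (pow_two_inv_antitone z.one_le) _
      calc 2 * s ≤ 2 * (q i * 2⁻¹ ^ (1:ℕ)) := mul_le_mul_right (hsz.trans h1) 2
        _ = q i * (2⁻¹ * 2) := by ring
        _ = q i := by rw [two_inv_mul_two, mul_one]
    have hi0K : i0 ∈ K := by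
      rw [hKdef, Set.Finite.mem_toFinset]
      exact hatom i0 z0 hs_eq.le
    -- consumed mass per atom
    set consumed : ℕ+ → ℝ≥0∞ :=
      fun i => ∑ t' ∈ (Finset.range t).filter (fun t' => (σ t').1 = i), π (σ t') with hconsdef
    set C := ∑ t' ∈ Finset.range t, π (σ t') with hCdef
    -- pieces consumed so far are at least as large as s
    have hbig : ∀ t' ∈ Finset.range t, s ≤ π (σ t') := by
      intro t' ht'
      exact hanti t' t (Finset.mem_range.1 ht').le
    -- atoms touched so far are in K
    have htouched : ∀ t' ∈ Finset.range t, (σ t').1 ∈ K := by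
      intro t' ht'
      rw [hKdef, Set.Finite.mem_toFinset]
      exact hatom (σ t').1 (σ t').2 (hbig t' ht')
    -- C = sum over K of consumed
    have hCK : C ≤ ∑ i ∈ K, consumed i := by
      rw [hCdef, ← Finset.sum_fiberwise_of_maps_to htouched (fun t' => π (σ t'))]
    -- per-atom bound, general form
    have hfiber_bound : ∀ i ∈ K, ∀ (M : ℕ),
        (∀ t' ∈ (Finset.range t).filter (fun t' => (σ t').1 = i), ((σ t').2 : ℕ) ≤ M) →
        consumed i + q i * 2⁻¹ ^ M ≤ q i := by
      intro i hi M hM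
      set F := (Finset.range t).filter (fun t' => (σ t').1 = i) with hFdef
      have hval : ∀ t' ∈ F, π (σ t') = q i * 2⁻¹ ^ (((σ t').2 : ℕ)) := by
        intro t' ht'
        have : (σ t').1 = i := (Finset.mem_filter.1 ht').2
        rw [hπdef]
        show q (σ t').1 * geomHalf (σ t').2 = _
        rw [this]; rfl
      have himg : consumed i = ∑ z ∈ F.image (fun t' => (σ t').2), q i * 2⁻¹ ^ (z : ℕ) := by
        rw [Finset.sum_image ?hinj]
        · rw [hconsdef]
          exact Finset.sum_congr rfl hval
        case hinj =>
          intro x hx y hy hxy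
          apply hinj
          have hx1 : (σ x).1 = i := (Finset.mem_filter.1 hx).2
          have hy1 : (σ y).1 = i := (Finset.mem_filter.1 hy).2
          exact Prod.ext (hx1.trans hy1.symm) hxy
      have hZM : ∀ z ∈ F.image (fun t' => (σ t').2), (z : ℕ) ≤ M := by
        intro z hz
        obtain ⟨t', ht', rfl⟩ := Finset.mem_image.1 hz
        exact hM t' ht'
      have hdya := dyadic_bound M _ hZM
      calc consumed i + q i * 2⁻¹ ^ M
          = q i * ((∑ z ∈ F.image (fun t' => (σ t').2), (2⁻¹:ℝ≥0∞) ^ (z:ℕ)) + 2⁻¹ ^ M) := by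
            rw [mul_add, himg, Finset.mul_sum]
        _ ≤ q i * 1 := mul_le_mul_right hdya _
        _ = q i := mul_one _
    -- C1 : per-atom bound
    have hC1 : ∀ i ∈ K, consumed i + s ≤ q i := by
      intro i hi
      have h2s : 2 * s ≤ q i := by rwa [hKdef, Set.Finite.mem_toFinset] at hi
      have hs2s : s ≤ 2 * s := by
        calc s = 1 * s := (one_mul s).symm
          _ ≤ 2 * s := mul_le_mul_left one_le_two s
      set F := (Finset.range t).filter (fun t' => (σ t').1 = i) with hFdef
      rcases F.eq_empty_or_nonempty with hF | hFne
      · have hcz : consumed i = 0 := by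
          show (∑ t' ∈ Finset.filter (fun t' => (σ t').1 = i) (Finset.range t), π (σ t')) = 0
          rw [← hFdef, hF, Finset.sum_empty]
        rw [hcz, zero_add]
        exact hs2s.trans h2s
      · have hZne : (F.image (fun t' => (σ t').2)).Nonempty := hFne.image _
        set M := (F.image (fun t' => (σ t').2)).max' hZne with hMdef
        have hM : ∀ t' ∈ F, ((σ t').2 : ℕ) ≤ (M : ℕ) := by
          intro t' ht'
          have h0 : (σ t').2 ≤ M := by
            rw [hMdef]
            exact Finset.le_max' _ _ (Finset.mem_image_of_mem (fun t' => (σ t').2) ht')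
          exact (PNat.coe_le_coe _ _).mpr h0
        have hfb := hfiber_bound i hi (M : ℕ) hM
        have hMZ := Finset.max'_mem _ hZne
        obtain ⟨t', ht', hteq⟩ := Finset.mem_image.1 hMZ
        have hfst : (σ t').1 = i := (Finset.mem_filter.1 ht').2
        have hsM : s ≤ q i * 2⁻¹ ^ (M : ℕ) := by
          have h1 := hbig t' (Finset.mem_filter.1 ht').1
          have h2 : π (σ t') = q i * 2⁻¹ ^ ((M : ℕ)) := by
            rw [hπdef]
            show q (σ t').1 * geomHalf (σ t').2 = _
            rw [hfst, hteq]; rfl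
          rwa [h2] at h1
        calc consumed i + s ≤ consumed i + q i * 2⁻¹ ^ (M:ℕ) := add_le_add_right hsM _
          _ ≤ q i := hfb
    -- helper for strict monotonicity of dyadic powers
    have hpowle : ∀ a b : ℕ, (2⁻¹:ℝ≥0∞)^a ≤ 2⁻¹^b → b ≤ a := by
      intro a b h
      by_contra hab
      push_neg at hab
      have h1 : (2⁻¹:ℝ≥0∞)^b = 2⁻¹^a * 2⁻¹^(b-a) := by
        rw [← pow_add]; congr 1; omega
      have h2 : (2⁻¹:ℝ≥0∞)^(b-a) < 1 := by
        have h2a : (2⁻¹:ℝ≥0∞)^(b-a) ≤ 2⁻¹^(1:ℕ) := pow_two_inv_antitone (by omega)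
        rw [pow_one] at h2a
        exact lt_of_le_of_lt h2a (ENNReal.inv_lt_one.mpr ENNReal.one_lt_two)
      have h3 : (2⁻¹:ℝ≥0∞)^a * 2⁻¹^(b-a) < 2⁻¹^a * 1 :=
        (ENNReal.mul_lt_mul_iff_right (a := (2⁻¹:ℝ≥0∞)^a)
          (pow_ne_zero a (by norm_num)) (ENNReal.pow_ne_top (by norm_num))).2 h2
      rw [mul_one] at h3
      rw [h1] at h
      exact absurd h (not_le.2 h3)
    -- C2 : sharpened bound for the atom of the current piece
    have hqi0_ne : q i0 ≠ 0 := by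
      intro h
      apply hst
      rw [hs_eq, h, zero_mul]
    have hqi0_top : q i0 ≠ ⊤ := fun h => by
      have := hqle1 i0
      rw [h] at this
      exact absurd this (by simp)
    have hC2 : consumed i0 + 2 * s ≤ q i0 := by
      have hM0 : ∀ t' ∈ (Finset.range t).filter (fun t' => (σ t').1 = i0),
          ((σ t').2 : ℕ) ≤ (z0 : ℕ) - 1 := by
        intro t' ht'
        obtain ⟨htr, hfst⟩ := Finset.mem_filter.1 ht'
        have hlt := Finset.mem_range.1 htr
        have hneq : σ t' ≠ σ t := fun h => by
          have := hinj h
          omega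
        have hz_ne : (σ t').2 ≠ z0 := by
          intro h
          exact hneq (Prod.ext hfst h)
        have h1 : π (σ t') = q i0 * 2⁻¹ ^ (((σ t').2 : ℕ)) := by
          rw [hπdef]
          show q (σ t').1 * geomHalf (σ t').2 = _
          rw [hfst]; rfl
        have h2 : q i0 * 2⁻¹ ^ ((z0:ℕ)) ≤ q i0 * 2⁻¹ ^ (((σ t').2 : ℕ)) := by
          rw [← h1, ← hs_eq]
          exact hbig t' htr
        have h3 : (2⁻¹:ℝ≥0∞) ^ ((z0:ℕ)) ≤ 2⁻¹ ^ (((σ t').2 : ℕ)) :=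
          (ENNReal.mul_le_mul_iff_right hqi0_ne hqi0_top).1 h2
        have h4 : ((σ t').2 : ℕ) ≤ (z0 : ℕ) := hpowle _ _ h3
        have h5 : ((σ t').2 : ℕ) ≠ (z0 : ℕ) := fun h => hz_ne (PNat.coe_injective h)
        omega
      have hfb := hfiber_bound i0 hi0K ((z0:ℕ) - 1) hM0
      have heq2 : 2 * s = q i0 * 2⁻¹ ^ ((z0:ℕ) - 1) := by
        have hz1 : ((z0:ℕ) - 1) + 1 = (z0:ℕ) := by
          have := z0.pos
          omega
        rw [hs_eq, ← hz1, pow_succ]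
        calc 2 * (q i0 * (2⁻¹ ^ ((z0:ℕ)-1) * 2⁻¹)) 
            = q i0 * 2⁻¹ ^ ((z0:ℕ)-1) * (2⁻¹ * 2) := by ring
          _ = q i0 * 2⁻¹ ^ ((z0:ℕ)-1) := by rw [two_inv_mul_two, mul_one]
      rw [heq2]
      exact hfb
    -- Q-side: C + (n+1) * s ≤ ∑_{i ∈ K} q i
    have hQside : C + ((n : ℝ≥0∞) * s + s) ≤ ∑ i ∈ K, q i := by
      have hpt : ∀ i ∈ K, consumed i + s + (if i = i0 then s else 0) ≤ q i := by
        intro i hi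
        by_cases h : i = i0
        · rw [if_pos h, add_assoc, h]
          calc consumed i0 + (s + s) = consumed i0 + 2 * s := by rw [two_mul]
            _ ≤ q i0 := hC2
        · rw [if_neg h, add_zero]
          exact hC1 i hi
      have hsum := Finset.sum_le_sum hpt
      have hlhs : ∑ i ∈ K, (consumed i + s + (if i = i0 then s else 0))
          = (∑ i ∈ K, consumed i) + (n : ℝ≥0∞) * s + s := by
        rw [Finset.sum_add_distrib, Finset.sum_add_distrib, Finset.sum_const,
          Finset.sum_ite_eq' K i0 (fun _ => s), if_pos hi0K, hndef, nsmul_eq_mul]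
      rw [hlhs] at hsum
      calc C + ((n : ℝ≥0∞) * s + s) ≤ (∑ i ∈ K, consumed i) + ((n : ℝ≥0∞) * s + s) := by
            exact add_le_add_left hCK _
        _ = (∑ i ∈ K, consumed i) + (n : ℝ≥0∞) * s + s := by rw [add_assoc]
        _ ≤ ∑ i ∈ K, q i := hsum
    -- bin side: topk p n ≤ C + n * s
    have hueq : ∀ (t'' : ℕ) (y : α),
        ustate t'' y = ∑ t' ∈ Finset.range t'', if G t' = y then π (σ t') else 0 := by
      intro t''
      induction t'' with
      | zero => intro y; rfl
      | succ t'' ih =>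
        intro y
        rw [husucc, ih, Finset.sum_range_succ]
    have hBin : topk p n ≤ C + (n : ℝ≥0∞) * s := by
      rw [topk]
      refine iSup_le fun A => iSup_le fun hA => ?_
      have hpA : ∀ y ∈ A, p y ≤ ustate t y + s := fun y _ => (hstuck y).le
      calc ∑ y ∈ A, p y ≤ ∑ y ∈ A, (ustate t y + s) := Finset.sum_le_sum hpA
        _ = (∑ y ∈ A, ustate t y) + A.card • s := by
          rw [Finset.sum_add_distrib, Finset.sum_const]
        _ ≤ (∑ y ∈ A, ustate t y) + (n : ℝ≥0∞) * s := by
          apply add_le_add_right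
          rw [nsmul_eq_mul]
          exact mul_le_mul_left (by exact_mod_cast hA) s
        _ ≤ C + (n : ℝ≥0∞) * s := by
          apply add_le_add_left
          have : ∑ y ∈ A, ustate t y
              = ∑ t' ∈ Finset.range t, ∑ y ∈ A, (if G t' = y then π (σ t') else 0) := by
            rw [← Finset.sum_comm]
            exact Finset.sum_congr rfl fun y _ => hueq t y
          rw [this, hCdef]
          apply Finset.sum_le_sum
          intro t' _
          rw [Finset.sum_ite_eq]
          split <;> simp
    -- contradiction
    have hmaj' := hmaj K
    rw [← hndef] at hmaj'
    have hchain : C + ((n:ℝ≥0∞) * s + s) ≤ C + (n:ℝ≥0∞) * s :=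
      (hQside.trans hmaj').trans hBin
    have hCtop : C + (n:ℝ≥0∞) * s ≠ ⊤ := by
      apply ENNReal.add_ne_top.2
      constructor
      · have : C ≤ ∑ t' ∈ Finset.range t, 1 :=
          Finset.sum_le_sum (fun t' _ => hπle1 _)
        simp at this
        exact fun h => by rw [h] at this; exact absurd this (by simp)
      · exact ENNReal.mul_ne_top (by simp) (fun h => by
          rw [h] at hsle1; exact absurd hsle1 (by simp))
    rw [← add_assoc] at hchain
    have hs0 : s ≤ 0 := by
      have h2 : C + (n:ℝ≥0∞) * s + s ≤ C + (n:ℝ≥0∞) * s + 0 := by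
        rwa [add_zero]
      exact (ENNReal.add_le_add_iff_left hCtop).1 h2
    exact hst (le_zero_iff.1 hs0)
  -- global invariant
  have hinv : ∀ t y, ustate t y ≤ p y := by
    intro t
    induction t with
    | zero => intro y; exact zero_le
    | succ t ih =>
      intro y
      rw [husucc]
      by_cases hy : G t = y
      · rw [if_pos hy, ← hy, hG t (P_all t)]
        exact (P_all t).choose_spec
      · rw [if_neg hy, add_zero]; exact ih y
  have hueq2 : ∀ (t : ℕ) (y' : α),
      ustate t y' = ∑ t' ∈ Finset.range t, if G t' = y' then π (σ t') else 0 := by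
    intro t
    induction t with
    | zero => intro y'; rfl
    | succ t ih => intro y'; rw [husucc, ih, Finset.sum_range_succ]
  have hGpos : ∀ t, p (G t) ≠ 0 := by
    intro t h
    have h1 : π (σ t) ≤ p (G t) := by
      rw [hG t (P_all t)]
      exact le_trans le_add_self (P_all t).choose_spec
    rw [h] at h1
    exact hpos t (le_zero_iff.1 h1)
  -- the aggregation map
  let g : ℕ+ × ℕ+ → α := fun x => if h : ∃ t', σ t' = x then G (Nat.find h) else y₀
  have hgσ : ∀ t, g (σ t) = G t := by
    intro t
    have hex : ∃ t', σ t' = σ t := ⟨t, rfl⟩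
    have h1 : g (σ t) = G (Nat.find hex) := dif_pos hex
    rw [h1, hinj (Nat.find_spec hex)]
  refine ⟨g, ?_, ?_⟩
  · intro x hx
    obtain ⟨t, rfl⟩ := hsurj x hx
    rw [hgσ]
    exact hGpos t
  · intro y
    have hsupp : Function.support (fun x => if g x = y then π x else 0) ⊆ Set.range σ := by
      intro x hx
      rw [Function.mem_support] at hx
      have hπx : π x ≠ 0 := by
        intro h; apply hx; split <;> simp [h]
      exact hsurj x hπx
    have hre := hinj.tsum_eq (f := fun x => if g x = y then π x else 0) hsupp
    set mass : α → ℝ≥0∞ := fun y' => ∑' t : ℕ, if G t = y' then π (σ t) else 0 with hmassdef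
    have hrhs : (∑' x : ℕ+ × ℕ+, if g x = y then π x else 0) = mass y := by
      rw [← hre]
      refine tsum_congr fun t => ?_
      show (if g (σ t) = y then π (σ t) else 0) = _
      rw [hgσ]
    have hmass_le : ∀ y', mass y' ≤ p y' := by
      intro y'
      rw [hmassdef]
      simp only []
      rw [ENNReal.tsum_eq_iSup_sum]
      refine iSup_le fun T => ?_
      have hTsub : T ⊆ Finset.range (T.sup id + 1) := by
        intro t ht
        rw [Finset.mem_range]
        exact Nat.lt_succ_of_le (Finset.le_sup (f := id) ht)
      calc ∑ t ∈ T, (if G t = y' then π (σ t) else 0)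
          ≤ ∑ t ∈ Finset.range (T.sup id + 1), (if G t = y' then π (σ t) else 0) :=
            Finset.sum_le_sum_of_subset hTsub
        _ = ustate (T.sup id + 1) y' := (hueq2 (T.sup id + 1) y').symm
        _ ≤ p y' := hinv (T.sup id + 1) y'
    have htot : ∑' y', mass y' = 1 := by
      rw [hmassdef]
      simp only []
      rw [ENNReal.tsum_comm]
      have hin : ∀ t : ℕ, (∑' y' : α, if G t = y' then π (σ t) else 0) = π (σ t) := by
        intro t
        have he : (fun y' : α => if G t = y' then π (σ t) else 0)
            = fun y' : α => if y' = G t then π (σ t) else 0 := by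
          funext y'
          by_cases h : G t = y'
          · rw [if_pos h, if_pos h.symm]
          · rw [if_neg h, if_neg (fun hh => h hh.symm)]
        rw [he, tsum_ite_eq]
      rw [tsum_congr hin]
      have hsupp2 : Function.support π ⊆ Set.range σ := fun x hx => hsurj x hx
      rw [hinj.tsum_eq hsupp2]
      exact tsum_prodFun hq1
    have hfinal : mass y = p y := by
      by_contra hne
      have hlt : mass y < p y := lt_of_le_of_ne (hmass_le y) hne
      have hcontra : (1:ℝ≥0∞) < 1 := by
        calc (1:ℝ≥0∞) = ∑' y', mass y' := htot.symm
          _ < ∑' y', p y' :=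
            ENNReal.tsum_lt_tsum (by rw [htot]; exact ENNReal.one_ne_top) hmass_le hlt
          _ = 1 := hp1
      exact absurd hcontra (lt_irrefl _)
    rw [hrhs]
    exact hfinal.symm


section glbfacts

variable {α : Type*} (S : Set (α → ℝ≥0∞))

lemma sum_A_le_topk {p : α → ℝ≥0∞} {k : ℕ} (A : Finset α) (h : A.card ≤ k) :
    ∑ x ∈ A, p x ≤ topk p k :=
  le_iSup_of_le A (le_iSup_of_le h le_rfl)

lemma topk_mono (p : α → ℝ≥0∞) {k l : ℕ} (h : k ≤ l) : topk p k ≤ topk p l := by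
  refine iSup_le fun A => iSup_le fun hA => sum_A_le_topk A (hA.trans h)

lemma topk_zero (p : α → ℝ≥0∞) : topk p 0 = 0 := by
  refine le_antisymm (iSup_le fun A => iSup_le fun hA => ?_) zero_le
  rw [Finset.card_eq_zero.1 (Nat.le_zero.1 hA), Finset.sum_empty]

lemma topk_le_tsum (p : α → ℝ≥0∞) (k : ℕ) : topk p k ≤ ∑' x, p x :=
  iSup_le fun A => iSup_le fun _ => ENNReal.sum_le_tsum A

lemma topk_eq_ite (p : α → ℝ≥0∞) (k : ℕ) :
    topk p k = ⨆ A : Finset α, (if A.card ≤ k then ∑ x ∈ A, p x else 0) := by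
  rw [topk]
  congr 1
  funext A
  by_cases h : A.card ≤ k
  · rw [iSup_pos h, if_pos h]
  · rw [iSup_neg h, if_neg h]
    rfl

lemma topk_concave (p : α → ℝ≥0∞) (k : ℕ) :
    topk p (k+2) + topk p k ≤ topk p (k+1) + topk p (k+1) := by
  have key : ∀ (A B : Finset α), A.card ≤ k + 2 → B.card ≤ k →
      ∑ x ∈ A, p x + ∑ x ∈ B, p x ≤ topk p (k+1) + topk p (k+1) := by
    intro A B hA hB
    by_cases hA1 : A.card ≤ k + 1
    · exact add_le_add (sum_A_le_topk A hA1) (sum_A_le_topk B (hB.trans (Nat.le_succ k)))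
    · have hAcard : A.card = k + 2 := by omega
      have hnotsub : ¬ (A ⊆ B) := fun hsub => by
        have := Finset.card_le_card hsub
        omega
      obtain ⟨x, hxA, hxB⟩ := Finset.not_subset.1 hnotsub
      have h1 : ∑ x ∈ A, p x + ∑ x ∈ B, p x
          = ∑ y ∈ A.erase x, p y + ∑ y ∈ insert x B, p y := by
        rw [Finset.sum_insert hxB, ← Finset.sum_erase_add A p hxA]
        ring
      rw [h1]
      refine add_le_add (sum_A_le_topk _ ?_) (sum_A_le_topk _ ?_)
      · rw [Finset.card_erase_of_mem hxA]; omega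
      · rw [Finset.card_insert_of_notMem hxB]; omega
  rw [topk_eq_ite p (k+2), topk_eq_ite p k]
  rw [ENNReal.iSup_add, iSup_le_iff]
  intro A
  rw [ENNReal.add_iSup, iSup_le_iff]
  intro B
  by_cases hA : A.card ≤ k + 2
  · by_cases hB : B.card ≤ k
    · rw [if_pos hA, if_pos hB]
      exact key A B hA hB
    · rw [if_pos hA, if_neg hB, add_zero]
      simpa using key A ∅ hA (by simp)
  · rw [if_neg hA, zero_add]
    by_cases hB : B.card ≤ k
    · rw [if_pos hB]
      calc ∑ x ∈ B, p x ≤ topk p (k+1) := sum_A_le_topk B (hB.trans (Nat.le_succ k))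
        _ ≤ topk p (k+1) + topk p (k+1) := self_le_add_left _ _
    · rw [if_neg hB]
      exact zero_le

variable {S}

lemma infTopk_le {p : α → ℝ≥0∞} (hp : p ∈ S) (k : ℕ) : infTopk S k ≤ topk p k :=
  iInf_le_of_le p (iInf_le_of_le hp le_rfl)

lemma infTopk_mono (hS : S.Nonempty) {k l : ℕ} (h : k ≤ l) : infTopk S k ≤ infTopk S l := by
  refine le_iInf fun p => le_iInf fun hp => (infTopk_le hp k).trans (topk_mono p h)

lemma infTopk_ne_top {p : α → ℝ≥0∞} (hp : p ∈ S) (hp1 : IsPMF p) (k : ℕ) :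
    infTopk S k ≠ ⊤ := by
  intro h
  have h1 := (infTopk_le hp k).trans ((topk_le_tsum p k).trans_eq hp1)
  rw [h] at h1
  exact absurd h1 (by simp)

lemma infTopk_zero (hS : S.Nonempty) : infTopk S 0 = 0 := by
  obtain ⟨p, hp⟩ := hS
  refine le_antisymm ?_ zero_le
  exact (infTopk_le hp 0).trans_eq (topk_zero p)

lemma infTopk_concave {p₀ : α → ℝ≥0∞} (hp₀ : p₀ ∈ S) (hp₀1 : IsPMF p₀) (k : ℕ) :
    infTopk S (k+2) + infTopk S k ≤ infTopk S (k+1) + infTopk S (k+1) := by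
  apply ENNReal.le_of_forall_pos_le_add
  intro ε hε hlt
  set δ := (ε : ℝ≥0∞) / 2 with hδ
  have hεne : (ε : ℝ≥0∞) ≠ 0 := by exact_mod_cast hε.ne'
  have hδ0 : 0 < δ := by
    rw [hδ]
    exact ENNReal.div_pos hεne (by norm_num)
  -- find p nearly attaining infTopk S (k+1)
  have hlt1 : infTopk S (k+1) < infTopk S (k+1) + δ :=
    ENNReal.lt_add_right (infTopk_ne_top hp₀ hp₀1 (k+1)) hδ0.ne'
  rw [infTopk] at hlt1
  obtain ⟨p, hp2⟩ := iInf_lt_iff.1 hlt1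
  obtain ⟨hpS, hp3⟩ := iInf_lt_iff.1 hp2
  have h1 : infTopk S (k+2) + infTopk S k ≤ topk p (k+2) + topk p k :=
    add_le_add (infTopk_le hpS _) (infTopk_le hpS _)
  have h2 := topk_concave p k
  have h3 : topk p (k+1) + topk p (k+1) ≤ (infTopk S (k+1) + δ) + (infTopk S (k+1) + δ) :=
    add_le_add hp3.le hp3.le
  calc infTopk S (k+2) + infTopk S k ≤ _ := h1.trans (h2.trans h3)
    _ = infTopk S (k+1) + infTopk S (k+1) + (δ + δ) := by ring
    _ = infTopk S (k+1) + infTopk S (k+1) + ε := by rw [hδ, ENNReal.add_halves]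

-- index helper
def pn (n : ℕ) : ℕ+ := ⟨n+1, Nat.succ_pos n⟩

lemma pn_coe (n : ℕ) : ((pn n : ℕ+) : ℕ) = n + 1 := rfl

lemma pn_inj : Function.Injective pn := by
  intro a b h
  have := congrArg (fun x : ℕ+ => (x : ℕ)) h
  simpa [pn_coe] using this

lemma glb_pn (n : ℕ) : glb S (pn n) = infTopk S (n+1) - infTopk S n := rfl

noncomputable def seg (k : ℕ) : Finset ℕ+ := (Finset.range k).image pn

lemma seg_succ (k : ℕ) : seg (k+1) = insert (pn k) (seg k) := by
  rw [seg, seg, Finset.range_add_one, Finset.image_insert]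

lemma pn_not_mem_seg (k : ℕ) : pn k ∉ seg k := by
  rw [seg]
  intro h
  obtain ⟨j, hj, hj2⟩ := Finset.mem_image.1 h
  have := pn_inj hj2
  rw [Finset.mem_range] at hj
  omega

lemma seg_card (k : ℕ) : (seg k).card = k := by
  rw [seg, Finset.card_image_of_injective _ pn_inj, Finset.card_range]

lemma sum_seg_glb {p₀ : α → ℝ≥0∞} (hp₀ : p₀ ∈ S) (hp₀1 : IsPMF p₀) (k : ℕ) :
    ∑ i ∈ seg k, glb S i = infTopk S k := by
  have hSne : S.Nonempty := ⟨p₀, hp₀⟩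
  induction k with
  | zero =>
    rw [show seg 0 = ∅ from rfl, Finset.sum_empty, infTopk_zero hSne]
  | succ k ih =>
    rw [seg_succ, Finset.sum_insert (pn_not_mem_seg k), ih, glb_pn, add_comm,
      add_tsub_cancel_of_le (infTopk_mono hSne (Nat.le_succ k))]

lemma glb_antitone_d {p₀ : α → ℝ≥0∞} (hp₀ : p₀ ∈ S) (hp₀1 : IsPMF p₀) (k : ℕ) :
    glb S (pn (k+1)) ≤ glb S (pn k) := by
  have hSne : S.Nonempty := ⟨p₀, hp₀⟩
  rw [glb_pn, glb_pn]
  rw [tsub_le_iff_right]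
  have hcan : glb S (pn k) + infTopk S k = infTopk S (k+1) := by
    rw [glb_pn, tsub_add_cancel_of_le (infTopk_mono hSne (Nat.le_succ k))]
  have hconc := infTopk_concave hp₀ hp₀1 k
  have : infTopk S (k+2) + infTopk S k ≤ (glb S (pn k) + infTopk S (k+1)) + infTopk S k := by
    calc infTopk S (k+2) + infTopk S k ≤ infTopk S (k+1) + infTopk S (k+1) := hconc
      _ = (glb S (pn k) + infTopk S k) + infTopk S (k+1) := by rw [hcan]
      _ = (glb S (pn k) + infTopk S (k+1)) + infTopk S k := by ring
  exact (ENNReal.add_le_add_iff_right (infTopk_ne_top hp₀ hp₀1 k)).1 this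

lemma glb_antitone {p₀ : α → ℝ≥0∞} (hp₀ : p₀ ∈ S) (hp₀1 : IsPMF p₀) :
    ∀ i j : ℕ+, i ≤ j → glb S j ≤ glb S i := by
  have hd : ∀ m n : ℕ, m ≤ n → glb S (pn n) ≤ glb S (pn m) := by
    intro m n h
    induction n with
    | zero => rw [Nat.le_zero.1 h]
    | succ n ih =>
      rcases Nat.lt_or_ge m (n+1) with h2 | h2
      · exact (glb_antitone_d hp₀ hp₀1 n).trans (ih (by omega))
      · rw [show m = n+1 by omega]
  intro i j hij
  have hi : i = pn ((i:ℕ) - 1) := by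
    apply PNat.coe_injective
    rw [pn_coe]
    have := i.pos
    omega
  have hj : j = pn ((j:ℕ) - 1) := by
    apply PNat.coe_injective
    rw [pn_coe]
    have := j.pos
    omega
  rw [hi, hj]
  apply hd
  have h1 := i.pos
  have h2 : (i:ℕ) ≤ (j:ℕ) := hij
  omega

lemma sum_finset_glb_le {p₀ : α → ℝ≥0∞} (hp₀ : p₀ ∈ S) (hp₀1 : IsPMF p₀) :
    ∀ (n : ℕ) (K : Finset ℕ+), K.card = n → ∑ i ∈ K, glb S i ≤ ∑ i ∈ seg n, glb S i := by
  intro n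
  induction n with
  | zero => intro K hK; rw [Finset.card_eq_zero.1 hK]; simp
  | succ n ih =>
    intro K hK
    have hKne : K.Nonempty := Finset.card_pos.1 (by omega)
    set M := K.max' hKne with hMdef
    have hMK := K.max'_mem hKne
    have hcard : K.card ≤ (M : ℕ) := by
      have hsub : K ⊆ Finset.Icc 1 M := by
        intro i hi
        rw [Finset.mem_Icc]
        exact ⟨i.one_le, Finset.le_max' _ _ hi⟩
      have := Finset.card_le_card hsub
      rw [PNat.card_Icc] at this
      simpa using this
    have hM_ge : pn n ≤ M := by
      have : (n+1 : ℕ) ≤ (M:ℕ) := by omega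
      exact (PNat.coe_le_coe _ _).1 (by rw [pn_coe]; exact this)
    calc ∑ i ∈ K, glb S i = ∑ i ∈ K.erase M, glb S i + glb S M :=
          (Finset.sum_erase_add _ _ hMK).symm
      _ ≤ ∑ i ∈ seg n, glb S i + glb S (pn n) := by
          refine add_le_add (ih _ ?_) (glb_antitone hp₀ hp₀1 _ _ hM_ge)
          rw [Finset.card_erase_of_mem hMK]
          omega
      _ = ∑ i ∈ seg (n+1), glb S i := by
          rw [seg_succ, Finset.sum_insert (pn_not_mem_seg n)]
          ring

lemma glb_tsum_eq_one {p₀ : α → ℝ≥0∞} (hp₀ : p₀ ∈ S) (hp₀1 : IsPMF p₀)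
    (hex : GlbExists S) : ∑' i, glb S i = 1 := by
  have hSne : S.Nonempty := ⟨p₀, hp₀⟩
  have hmono : Monotone (fun k => infTopk S k) := fun a b h => infTopk_mono hSne h
  have hsup : (⨆ k, infTopk S k) = 1 :=
    tendsto_nhds_unique (tendsto_atTop_iSup hmono) hex
  rw [ENNReal.tsum_eq_iSup_sum]
  apply le_antisymm
  · refine iSup_le fun F => ?_
    calc ∑ i ∈ F, glb S i ≤ ∑ i ∈ seg F.card, glb S i :=
          sum_finset_glb_le hp₀ hp₀1 _ F rfl
      _ = infTopk S F.card := sum_seg_glb hp₀ hp₀1 _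
      _ ≤ ⨆ k, infTopk S k := le_iSup _ _
      _ = 1 := hsup
  · rw [← hsup]
    refine iSup_le fun k => ?_
    rw [← sum_seg_glb hp₀ hp₀1 k]
    exact le_iSup_of_le (seg k) le_rfl


end glbfacts
end Aux

/-- Corollary 2: if `⋀S` exists, then `(⋀S) × Geom_{1/2} ∈ Γ̃(S)`,
i.e. `(⋀S) × Geom_{1/2} ⊑ p` for every `p ∈ S`. -/
theorem glb_prod_geom_underlying_coupling {α : Type*} [Countable α]
    (S : Set (α → ℝ≥0∞)) (hS : ∀ p ∈ S, IsPMF p) (hex : GlbExists S) :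
    ∀ p ∈ S, Agg (prodFun (glb S) geomHalf) p := by
  intro p hp
  apply exists_agg p (glb S) (hS p hp) (glb_tsum_eq_one hp (hS p hp) hex)
  intro K
  calc ∑ i ∈ K, glb S i ≤ ∑ i ∈ seg K.card, glb S i :=
        sum_finset_glb_le hp (hS p hp) _ K rfl
    _ = infTopk S K.card := sum_seg_glb hp (hS p hp) _
    _ ≤ topk p K.card := infTopk_le hp _

end MEC
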